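/- Simulation Lemma (TV form): Let M = ⟨X, A, R, P, γ⟩ and M̂ = ⟨X, A, R̂, P̂, γ⟩ be two MDPs sharing a finite state space X and finite action space A, with discount γ ∈ [0,1), rewards bounded by |R(x,a)| ≤ R_max and |R̂(x,a)| ≤ R_max. Suppose for all (x,a): |R(x,a) − R̂(x,a)| ≤ ε_R and the ℓ1 distance ‖P(·|x,a) − P̂(·|x,a)‖₁ ≤ ε_P. Then for any stationary policy π, the discounted value functions satisfy sup_x |V_M^π(x) − V_M̂^π(x)| ≤ ε_R/(1−γ) + γ R_max ε_P/(1−γ)². -/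

import Mathlib

open Finset Filter Topology

/-- The state distribution at time `n` when starting from state `x0`,
following policy `π` and transition kernel `P`. -/
noncomputable def stateDist {X A : Type*} [Fintype X] [Fintype A] [DecidableEq X]
    (P : X → A → X → ℝ) (π : X → A → ℝ) (x0 : X) : ℕ → X → ℝ
  | 0 => fun x => if x = x0 then 1 else 0
  | n + 1 => fun x' => ∑ x, ∑ a, stateDist P π x0 n x * π x a * P x a x'

/-- The infinite-horizon discounted value of stationary policy `π` in the MDP
with reward `R`, transition kernel `P`, and discount `γ`, starting from `x0`. -/
noncomputable def value {X A : Type*} [Fintype X] [Fintype A] [DecidableEq X]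
    (R : X → A → ℝ) (P : X → A → X → ℝ) (π : X → A → ℝ) (γ : ℝ) (x0 : X) : ℝ :=
  ∑' n : ℕ, γ ^ n * ∑ x, ∑ a, stateDist P π x0 n x * π x a * R x a

/-- The policy Bellman operator. -/
noncomputable def bellmanOp {X A : Type*} [Fintype X] [Fintype A]
    (R : X → A → ℝ) (P : X → A → X → ℝ) (π : X → A → ℝ) (γ : ℝ)
    (V : X → ℝ) : X → ℝ :=
  fun x => ∑ a, π x a * (R x a + γ * ∑ x', P x a x' * V x')

/-- The pushforward transition kernel induced by an encoder `Φ`. -/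
noncomputable def pushKernel {S A C : Type*} [Fintype S] [DecidableEq C]
    (P : S → A → S → ℝ) (Φ : S → C) : S → A → C → ℝ :=
  fun s a c => ∑ s', P s a s' * (if Φ s' = c then 1 else 0)

section Aux
variable {X A : Type*} [Fintype X] [Fintype A] [DecidableEq X]
  (P : X → A → X → ℝ) (π : X → A → ℝ) (x0 : X)

lemma stateDist_nonneg (hπ0 : ∀ x a, 0 ≤ π x a) (hP0 : ∀ x a x', 0 ≤ P x a x') :
    ∀ n x, 0 ≤ stateDist P π x0 n x := by
  intro n
  induction n with
  | zero => intro x; simp only [stateDist]; positivity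
  | succ n ih =>
    intro x'
    simp only [stateDist]
    refine Finset.sum_nonneg fun x _ => Finset.sum_nonneg fun a _ => ?_
    exact mul_nonneg (mul_nonneg (ih x) (hπ0 x a)) (hP0 x a x')

lemma stateDist_sum_eq_one (hπ1 : ∀ x, ∑ a, π x a = 1) (hP1 : ∀ x a, ∑ x', P x a x' = 1) :
    ∀ n, ∑ x, stateDist P π x0 n x = 1 := by
  intro n
  induction n with
  | zero => simp [stateDist]
  | succ n ih =>
    simp only [stateDist]
    rw [Finset.sum_comm]
    calc ∑ x, ∑ x', ∑ a, stateDist P π x0 n x * π x a * P x a x'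
        = ∑ x, ∑ a, ∑ x', stateDist P π x0 n x * π x a * P x a x' := by
          exact Finset.sum_congr rfl fun _ _ => Finset.sum_comm
      _ = ∑ x, ∑ a, stateDist P π x0 n x * π x a := by
          refine Finset.sum_congr rfl fun x _ => Finset.sum_congr rfl fun a _ => ?_
          rw [← Finset.mul_sum, hP1, mul_one]
      _ = ∑ x, stateDist P π x0 n x := by
          refine Finset.sum_congr rfl fun x _ => ?_
          rw [← Finset.mul_sum, hπ1, mul_one]
      _ = 1 := ih

end Aux

section Aux2
variable {X A : Type*} [Fintype X] [Fintype A] [DecidableEq X]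
  (P P' : X → A → X → ℝ) (π : X → A → ℝ) (x0 : X) (εP : ℝ)

lemma stateDist_l1
    (hπ0 : ∀ x a, 0 ≤ π x a) (hπ1 : ∀ x, ∑ a, π x a = 1)
    (hP0 : ∀ x a x', 0 ≤ P x a x') (hP1 : ∀ x a, ∑ x', P x a x' = 1)
    (hP'0 : ∀ x a x', 0 ≤ P' x a x') (hP'1 : ∀ x a, ∑ x', P' x a x' = 1)
    (hεP : ∀ x a, ∑ x', |P x a x' - P' x a x'| ≤ εP) :
    ∀ n, ∑ x, |stateDist P π x0 n x - stateDist P' π x0 n x| ≤ n * εP := by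
  intro n
  induction n with
  | zero => simp [stateDist]
  | succ n ih =>
    set d := stateDist P π x0 n with hd
    set d' := stateDist P' π x0 n with hd'
    have hd'0 : ∀ x, 0 ≤ d' x := fun x => stateDist_nonneg P' π x0 hπ0 hP'0 n x
    have key : ∀ x', |stateDist P π x0 (n+1) x' - stateDist P' π x0 (n+1) x'| ≤
        ∑ x, ∑ a, (|d x - d' x| * π x a * P x a x' + d' x * π x a * |P x a x' - P' x a x'|) := by
      intro x'
      simp only [stateDist, ← hd, ← hd']
      rw [← Finset.sum_sub_distrib]
      refine (Finset.abs_sum_le_sum_abs _ _).trans (Finset.sum_le_sum fun x _ => ?_)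
      rw [← Finset.sum_sub_distrib]
      refine (Finset.abs_sum_le_sum_abs _ _).trans (Finset.sum_le_sum fun a _ => ?_)
      have e1 : d x * π x a * P x a x' - d' x * π x a * P' x a x'
          = (d x - d' x) * π x a * P x a x' + d' x * π x a * (P x a x' - P' x a x') := by ring
      rw [e1]
      refine (abs_add_le _ _).trans (le_of_eq ?_)
      rw [abs_mul, abs_mul, abs_mul, abs_mul, abs_of_nonneg (hπ0 x a),
        abs_of_nonneg (hP0 x a x'), abs_of_nonneg (hd'0 x)]
    calc ∑ x', |stateDist P π x0 (n+1) x' - stateDist P' π x0 (n+1) x'|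
        ≤ ∑ x', ∑ x, ∑ a, (|d x - d' x| * π x a * P x a x'
            + d' x * π x a * |P x a x' - P' x a x'|) :=
          Finset.sum_le_sum fun x' _ => key x'
      _ = ∑ x, ∑ a, (|d x - d' x| * π x a * (∑ x', P x a x')
            + d' x * π x a * (∑ x', |P x a x' - P' x a x'|)) := by
          rw [Finset.sum_comm]
          refine Finset.sum_congr rfl fun x _ => ?_
          rw [Finset.sum_comm]
          refine Finset.sum_congr rfl fun a _ => ?_
          rw [Finset.sum_add_distrib, ← Finset.mul_sum, ← Finset.mul_sum]
      _ ≤ ∑ x, ∑ a, (|d x - d' x| * π x a * 1 + d' x * π x a * εP) := by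
          refine Finset.sum_le_sum fun x _ => Finset.sum_le_sum fun a _ => ?_
          refine add_le_add (le_of_eq (by rw [hP1])) ?_
          exact mul_le_mul_of_nonneg_left (hεP x a) (mul_nonneg (hd'0 x) (hπ0 x a))
      _ = (∑ x, |d x - d' x|) + (∑ x, d' x) * εP := by
          rw [Finset.sum_mul, ← Finset.sum_add_distrib]
          refine Finset.sum_congr rfl fun x _ => ?_
          rw [Finset.sum_add_distrib]
          congr 1
          · simp only [mul_one]
            rw [← Finset.mul_sum, hπ1, mul_one]
          · rw [← Finset.sum_mul, ← Finset.mul_sum, hπ1, mul_one]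
      _ = (∑ x, |d x - d' x|) + εP := by
          rw [stateDist_sum_eq_one P' π x0 hπ1 hP'1 n, one_mul]
      _ ≤ n * εP + εP := by gcongr
      _ = (n + 1 : ℕ) * εP := by push_cast; ring

end Aux2

section Aux3
variable {X A : Type*} [Fintype X] [Fintype A]

lemma reward_diff (R R' : X → A → ℝ) (π : X → A → ℝ) (d d' : X → ℝ)
    (Rmax εR : ℝ)
    (hd0 : ∀ x, 0 ≤ d x) (hd1 : ∑ x, d x = 1)
    (hπ0 : ∀ x a, 0 ≤ π x a) (hπ1 : ∀ x, ∑ a, π x a = 1)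
    (hR' : ∀ x a, |R' x a| ≤ Rmax)
    (hεR : ∀ x a, |R x a - R' x a| ≤ εR) :
    |(∑ x, ∑ a, d x * π x a * R x a) - ∑ x, ∑ a, d' x * π x a * R' x a|
      ≤ εR + Rmax * ∑ x, |d x - d' x| := by
  calc |(∑ x, ∑ a, d x * π x a * R x a) - ∑ x, ∑ a, d' x * π x a * R' x a|
      ≤ ∑ x, ∑ a, (d x * π x a * εR + |d x - d' x| * π x a * Rmax) := by
        rw [← Finset.sum_sub_distrib]
        refine (Finset.abs_sum_le_sum_abs _ _).trans (Finset.sum_le_sum fun x _ => ?_)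
        rw [← Finset.sum_sub_distrib]
        refine (Finset.abs_sum_le_sum_abs _ _).trans (Finset.sum_le_sum fun a _ => ?_)
        have e1 : d x * π x a * R x a - d' x * π x a * R' x a
            = d x * π x a * (R x a - R' x a) + (d x - d' x) * π x a * R' x a := by ring
        rw [e1]
        refine (abs_add_le _ _).trans ?_
        rw [abs_mul, abs_mul, abs_mul, abs_mul, abs_of_nonneg (hπ0 x a),
          abs_of_nonneg (hd0 x)]
        refine add_le_add ?_ ?_
        · exact mul_le_mul_of_nonneg_left (hεR x a) (mul_nonneg (hd0 x) (hπ0 x a))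
        · exact mul_le_mul_of_nonneg_left (hR' x a)
            (mul_nonneg (abs_nonneg _) (hπ0 x a))
    _ = ∑ x, (d x * εR + |d x - d' x| * Rmax) := by
        refine Finset.sum_congr rfl fun x _ => ?_
        rw [Finset.sum_add_distrib]
        congr 1
        · rw [← Finset.sum_mul, ← Finset.mul_sum, hπ1, mul_one]
        · rw [← Finset.sum_mul, ← Finset.mul_sum, hπ1, mul_one]
    _ = εR + Rmax * ∑ x, |d x - d' x| := by
        rw [Finset.sum_add_distrib, ← Finset.sum_mul, hd1, one_mul, ← Finset.sum_mul,
          mul_comm]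

end Aux3

theorem simulation_lemma_TV {X A : Type*} [Fintype X] [Fintype A] [DecidableEq X]
    (R R' : X → A → ℝ) (P P' : X → A → X → ℝ) (π : X → A → ℝ)
    (γ Rmax εR εP : ℝ) (hγ0 : 0 ≤ γ) (hγ1 : γ < 1)
    (hπ0 : ∀ x a, 0 ≤ π x a) (hπ1 : ∀ x, ∑ a, π x a = 1)
    (hP0 : ∀ x a x', 0 ≤ P x a x') (hP1 : ∀ x a, ∑ x', P x a x' = 1)
    (hP'0 : ∀ x a x', 0 ≤ P' x a x') (hP'1 : ∀ x a, ∑ x', P' x a x' = 1)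
    (hR : ∀ x a, |R x a| ≤ Rmax) (hR' : ∀ x a, |R' x a| ≤ Rmax)
    (hεR : ∀ x a, |R x a - R' x a| ≤ εR)
    (hεP : ∀ x a, ∑ x', |P x a x' - P' x a x'| ≤ εP) :
    ∀ x, |value R P π γ x - value R' P' π γ x| ≤
      εR / (1 - γ) + γ * Rmax * εP / (1 - γ) ^ 2 := by
  intro x0
  -- nonemptiness of A and sign facts
  have hA : ∃ a : A, True := by
    by_contra h
    push_neg at h
    have : IsEmpty A := ⟨fun a => h a⟩
    have h1 := hπ1 x0
    simp [Finset.univ_eq_empty] at h1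
  obtain ⟨a0, -⟩ := hA
  have hRmax0 : 0 ≤ Rmax := le_trans (abs_nonneg _) (hR x0 a0)
  have hεR0 : 0 ≤ εR := le_trans (abs_nonneg _) (hεR x0 a0)
  have hεP0 : 0 ≤ εP :=
    le_trans (Finset.sum_nonneg fun _ _ => abs_nonneg _) (hεP x0 a0)
  have hγabs : ‖γ‖ < 1 := by rw [Real.norm_eq_abs, abs_of_nonneg hγ0]; exact hγ1
  have h1γ : 0 < 1 - γ := by linarith
  set d := stateDist P π x0 with hdd
  set d' := stateDist P' π x0 with hdd'
  set S : ℕ → ℝ := fun n => ∑ x, ∑ a, d n x * π x a * R x a with hS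
  set S' : ℕ → ℝ := fun n => ∑ x, ∑ a, d' n x * π x a * R' x a with hS'
  have hd0 : ∀ n x, 0 ≤ d n x := fun n x => stateDist_nonneg P π x0 hπ0 hP0 n x
  have hd'0 : ∀ n x, 0 ≤ d' n x := fun n x => stateDist_nonneg P' π x0 hπ0 hP'0 n x
  have hd1 : ∀ n, ∑ x, d n x = 1 := stateDist_sum_eq_one P π x0 hπ1 hP1
  have hd'1 : ∀ n, ∑ x, d' n x = 1 := stateDist_sum_eq_one P' π x0 hπ1 hP'1
  -- bound on |S n| and |S' n|
  have hSb : ∀ (T : X → A → ℝ) (e : ℕ → X → ℝ), (∀ x a, |T x a| ≤ Rmax) →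
      (∀ n x, 0 ≤ e n x) → (∀ n, ∑ x, e n x = 1) →
      ∀ n, |∑ x, ∑ a, e n x * π x a * T x a| ≤ Rmax := by
    intro T e hT he0 he1 n
    have := reward_diff T (fun _ _ => 0) π (e n) (e n) Rmax Rmax
      (he0 n) (he1 n) hπ0 hπ1 (fun x a => by simpa using hRmax0)
      (fun x a => by simpa using hT x a)
    simpa using this
  have hSbound : ∀ n, |S n| ≤ Rmax := fun n => hSb R d hR hd0 hd1 n
  have hS'bound : ∀ n, |S' n| ≤ Rmax := fun n => hSb R' d' hR' hd'0 hd'1 n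
  -- summability of the two value series
  have hsum : ∀ (T : ℕ → ℝ), (∀ n, |T n| ≤ Rmax) →
      Summable (fun n => γ ^ n * T n) := by
    intro T hT
    refine Summable.of_norm_bounded
      ((summable_geometric_of_lt_one hγ0 hγ1).mul_left Rmax) fun n => ?_
    rw [Real.norm_eq_abs, abs_mul, abs_pow, abs_of_nonneg hγ0, mul_comm]
    exact mul_le_mul_of_nonneg_right (hT n) (pow_nonneg hγ0 n)
  have hf : Summable (fun n => γ ^ n * S n) := hsum S hSbound
  have hg : Summable (fun n => γ ^ n * S' n) := hsum S' hS'bound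
  -- termwise bound
  have hterm : ∀ n : ℕ, |γ ^ n * S n - γ ^ n * S' n| ≤
      εR * γ ^ n + (Rmax * εP) * ((n : ℝ) * γ ^ n) := by
    intro n
    have h1 : |S n - S' n| ≤ εR + Rmax * ((n : ℝ) * εP) := by
      have h2 := reward_diff R R' π (d n) (d' n) Rmax εR (hd0 n) (hd1 n) hπ0 hπ1 hR' hεR
      have h3 := stateDist_l1 P P' π x0 εP hπ0 hπ1 hP0 hP1 hP'0 hP'1 hεP n
      calc |S n - S' n| ≤ εR + Rmax * ∑ x, |d n x - d' n x| := h2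
        _ ≤ εR + Rmax * ((n : ℝ) * εP) := by gcongr
    calc |γ ^ n * S n - γ ^ n * S' n| = γ ^ n * |S n - S' n| := by
          rw [← mul_sub, abs_mul, abs_pow, abs_of_nonneg hγ0]
      _ ≤ γ ^ n * (εR + Rmax * ((n : ℝ) * εP)) :=
          mul_le_mul_of_nonneg_left h1 (pow_nonneg hγ0 n)
      _ = εR * γ ^ n + (Rmax * εP) * ((n : ℝ) * γ ^ n) := by ring
  -- summability of the bound
  have hb : Summable (fun n : ℕ => εR * γ ^ n + (Rmax * εP) * ((n : ℝ) * γ ^ n)) := by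
    refine Summable.add ((summable_geometric_of_lt_one hγ0 hγ1).mul_left εR) ?_
    exact ((hasSum_coe_mul_geometric_of_norm_lt_one hγabs).summable).mul_left (Rmax * εP)
  -- put it together
  have hv : value R P π γ x0 = ∑' n : ℕ, γ ^ n * S n := rfl
  have hv' : value R' P' π γ x0 = ∑' n : ℕ, γ ^ n * S' n := rfl
  clear_value S S'
  have hdiff : value R P π γ x0 - value R' P' π γ x0
      = ∑' n : ℕ, (γ ^ n * S n - γ ^ n * S' n) := by
    rw [hv, hv', Summable.tsum_sub hf hg]
  rw [hdiff]
  have habs : Summable (fun n : ℕ => |γ ^ n * S n - γ ^ n * S' n|) :=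
    Summable.of_nonneg_of_le (fun n => abs_nonneg _) hterm hb
  calc |∑' n : ℕ, (γ ^ n * S n - γ ^ n * S' n)|
      ≤ ∑' n : ℕ, |γ ^ n * S n - γ ^ n * S' n| := by
        have h := norm_tsum_le_tsum_norm (f := fun n : ℕ => γ ^ n * S n - γ ^ n * S' n)
          (by simpa only [Real.norm_eq_abs] using habs)
        simpa only [Real.norm_eq_abs] using h
    _ ≤ ∑' n : ℕ, (εR * γ ^ n + (Rmax * εP) * ((n : ℝ) * γ ^ n)) :=
        Summable.tsum_le_tsum hterm habs hb
    _ = εR * (1 - γ)⁻¹ + (Rmax * εP) * (γ / (1 - γ) ^ 2) := by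
        rw [Summable.tsum_add ((summable_geometric_of_lt_one hγ0 hγ1).mul_left εR)
          (((hasSum_coe_mul_geometric_of_norm_lt_one hγabs).summable).mul_left (Rmax * εP)),
          tsum_mul_left, tsum_mul_left, tsum_geometric_of_lt_one hγ0 hγ1,
          tsum_coe_mul_geometric_of_norm_lt_one hγabs]
    _ = εR / (1 - γ) + γ * Rmax * εP / (1 - γ) ^ 2 := by
        ring
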